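/- arXiv:1312.3784 — 2 statements merged into one kernel-verified Lean document; each statement's English description precedes it below -/
import Mathlib

section
/- Let U ∈ 𝔏 be invertible (a unit of the matrix ring over LaurentPolynomial ℂ). Then the map σ : 𝔏 × ℂ → 𝔏 × ℂ given by σ(a, λ) = (U*a*U⁻¹, λ + Res(trace(U⁻¹ * U' * a))) is a Lie algebra automorphism of the central extension 𝔏 × ℂ with bracket [(a,λ),(b,μ)] = ([a,b], ψ(a,b)), where U' denotes the entrywise Laurent derivative ((U')ₙ = (n+1)·U_{n+1}) and Res(P) is the coefficient of t⁻¹ of P. This is the type 1(a) automorphism formula of the paper. -/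
noncomputable section

/-- The loop algebra: `N × N` matrices over Laurent polynomials, a Lie ring under the
commutator bracket `⁅a, b⁆ = a * b - b * a`. -/
abbrev Loop (N : ℕ) := Matrix (Fin N) (Fin N) (LaurentPolynomial ℂ)

/-- The matrix of `n`-th Laurent coefficients of the entries of `a`. -/
def coeffM {N : ℕ} (a : Loop N) (n : ℤ) : Matrix (Fin N) (Fin N) ℂ :=
  fun i j => (a i j).coeff n

/-- The cocycle `ψ(a,b) = Σₙ n · trace(aₙ * b₋ₙ)`, i.e. `Res(tr((da/dt)·b))`. -/
def psi {N : ℕ} (a b : Loop N) : ℂ :=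
  ∑ᶠ n : ℤ, (n : ℂ) * Matrix.trace (coeffM a n * coeffM b (-n))

/-- The entrywise Laurent derivative: `(Uʹ)ₙ = (n+1)·U_{n+1}`. -/
def derM {N : ℕ} (a : Loop N) : Loop N :=
  fun i j => Finsupp.sum (a i j).coeff fun n c => AddMonoidAlgebra.single (n - 1) ((n : ℂ) * c)

/-- The residue of a Laurent polynomial: the coefficient of `t⁻¹`. -/
def res (p : LaurentPolynomial ℂ) : ℂ := p.coeff (-1)

/-- The bracket of the central extension $\tilde L(g) = 𝔏 ⊕ ℂc$. -/
def brCE {N : ℕ} (x y : Loop N × ℂ) : Loop N × ℂ :=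
  (⁅x.1, y.1⁆, psi x.1 y.1)

/-- The type 1(a) automorphism attached to a unit `U`:
`σ(a, λ) = (U a U⁻¹, λ + Res(tr(U⁻¹ Uʹ a)))`. -/
def sigmaU {N : ℕ} (U : (Loop N)ˣ) (x : Loop N × ℂ) : Loop N × ℂ :=
  ((U : Loop N) * x.1 * (↑U⁻¹ : Loop N),
    x.2 + res (Matrix.trace ((↑U⁻¹ : Loop N) * derM (U : Loop N) * x.1)))

/-! ### Auxiliary scalar lemmas about the Laurent derivative -/

local notation "R" => LaurentPolynomial ℂ

def toR (f : ℤ →₀ ℂ) : R := AddMonoidAlgebra.ofCoeff f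

def sngl (n : ℤ) (c : ℂ) : R := AddMonoidAlgebra.single n c

def dLP (p : R) : R := Finsupp.sum p.coeff fun n c => AddMonoidAlgebra.single (n - 1) ((n : ℂ) * c)

lemma sngl_mul (n m : ℤ) (c e : ℂ) : sngl n c * sngl m e = sngl (n+m) (c*e) :=
  AddMonoidAlgebra.single_mul_single _ _ _ _

lemma dLP_sngl (n : ℤ) (c : ℂ) : dLP (sngl n c) = sngl (n-1) ((n:ℂ)*c) := by
  rw [dLP, sngl, AddMonoidAlgebra.coeff_single, Finsupp.sum_single_index]
  · rfl
  · rw [mul_zero, AddMonoidAlgebra.single_zero]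

lemma dLP_zero : dLP 0 = 0 := by
  unfold dLP; exact Finsupp.sum_zero_index

lemma dLP_add (p q : R) : dLP (p + q) = dLP p + dLP q := by
  unfold dLP
  rw [AddMonoidAlgebra.coeff_add, Finsupp.sum_add_index]
  · intro a _; rw [mul_zero, AddMonoidAlgebra.single_zero]
  · intro a _ b₁ b₂; rw [mul_add, AddMonoidAlgebra.single_add]

lemma dLP_mul (p q : R) : dLP (p * q) = dLP p * q + p * dLP q := by
  have main : ∀ f : ℤ →₀ ℂ, dLP (toR f * q) = dLP (toR f) * q + toR f * dLP q := by
    intro f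
    refine Finsupp.induction_linear
      (motive := fun f : ℤ →₀ ℂ => dLP (toR f * q) = dLP (toR f) * q + toR f * dLP q) f ?_ ?_ ?_
    · show dLP ((0:R) * q) = dLP (0:R) * q + (0:R) * dLP q
      rw [zero_mul, dLP_zero, zero_mul, zero_mul, add_zero]
    · intro f g hf hg
      show dLP ((toR f + toR g) * q) = dLP (toR f + toR g) * q + (toR f + toR g) * dLP q
      rw [add_mul, dLP_add, hf, hg, dLP_add, add_mul, add_mul]; ring
    · intro n c
      have key : ∀ g : ℤ →₀ ℂ, dLP (sngl n c * toR g) =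
          dLP (sngl n c) * toR g + sngl n c * dLP (toR g) := by
        intro g
        refine Finsupp.induction_linear
          (motive := fun g : ℤ →₀ ℂ => dLP (sngl n c * toR g) =
            dLP (sngl n c) * toR g + sngl n c * dLP (toR g)) g ?_ ?_ ?_
        · show dLP (sngl n c * 0) = dLP (sngl n c) * (0:R) + sngl n c * dLP (0:R)
          rw [mul_zero, dLP_zero, mul_zero, mul_zero, add_zero]
        · intro f g hf hg
          show dLP (sngl n c * (toR f + toR g)) =
            dLP (sngl n c) * (toR f + toR g) + sngl n c * dLP (toR f + toR g)
          rw [mul_add, dLP_add, hf, hg, dLP_add, mul_add, mul_add]; ring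
        · intro m e
          show dLP (sngl n c * sngl m e) =
            dLP (sngl n c) * sngl m e + sngl n c * dLP (sngl m e)
          rw [sngl_mul, dLP_sngl, dLP_sngl, dLP_sngl, sngl_mul, sngl_mul,
            show n - 1 + m = n + m - 1 by ring, show n + (m-1) = n + m - 1 by ring]
          unfold sngl
          rw [← AddMonoidAlgebra.single_add]
          congr 1
          push_cast
          ring
      exact key q.coeff
  exact main p.coeff

lemma dLP_coeff (p : R) (m : ℤ) : (dLP p).coeff m = ((m:ℂ)+1) * p.coeff (m+1) := by
  unfold dLP
  rw [AddMonoidAlgebra.coeff_finsuppSum, Finsupp.sum_apply]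
  rw [Finsupp.sum]
  have : ∀ n ∈ p.coeff.support, (AddMonoidAlgebra.single (n-1) ((n:ℂ) * p.coeff n)).coeff m
      = if n = m + 1 then (n:ℂ) * p.coeff n else 0 := by
    intro n _
    rw [AddMonoidAlgebra.coeff_single, Finsupp.single_apply]
    congr 1
    simp only [eq_iff_iff]
    omega
  rw [Finset.sum_congr rfl this, Finset.sum_ite_eq' p.coeff.support (m+1) (fun n => (n:ℂ) * p.coeff n)]
  split
  · push_cast; ring
  next h => rw [Finsupp.notMem_support_iff.mp h, mul_zero]

lemma mul_coeff (p q : R) (x : ℤ) {s : Finset ℤ} (hs : p.coeff.support ⊆ s) :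
    (p * q).coeff x = ∑ n ∈ s, p.coeff n * q.coeff (x - n) := by
  rw [AddMonoidAlgebra.coeff_mul, Finsupp.sum]
  have step1 : ∀ a₁ ∈ p.coeff.support,
      (Finsupp.sum q.coeff fun a₂ b₂ => if a₁ + a₂ = x then p.coeff a₁ * b₂ else 0)
        = p.coeff a₁ * q.coeff (x - a₁) := by
    intro a₁ _
    rw [Finsupp.sum]
    have : ∀ a₂ ∈ q.coeff.support, (if a₁ + a₂ = x then p.coeff a₁ * q.coeff a₂ else 0)
        = if a₂ = x - a₁ then p.coeff a₁ * q.coeff a₂ else 0 := by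
      intro a₂ _; congr 1; simp only [eq_iff_iff]; omega
    rw [Finset.sum_congr rfl this, Finset.sum_ite_eq' q.coeff.support (x - a₁) (fun a₂ => p.coeff a₁ * q.coeff a₂)]
    split
    · rfl
    next h => rw [Finsupp.notMem_support_iff.mp h, mul_zero]
  rw [Finset.sum_congr rfl step1]
  exact Finset.sum_subset hs fun n _ hn => by
    rw [Finsupp.notMem_support_iff.mp hn, zero_mul]

lemma key_coeff (p q : R) {s : Finset ℤ} (hs : p.coeff.support ⊆ s) :
    (dLP p * q).coeff (-1) = ∑ n ∈ s, (n:ℂ) * p.coeff n * q.coeff (-n) := by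
  have hsub : (dLP p).coeff.support ⊆ s.image (· - 1) := by
    intro m hm
    rw [Finsupp.mem_support_iff, dLP_coeff] at hm
    have h1 : p.coeff (m+1) ≠ 0 := fun h => hm (by rw [h, mul_zero])
    exact Finset.mem_image.mpr ⟨m+1, hs (Finsupp.mem_support_iff.mpr h1), by ring⟩
  rw [mul_coeff (dLP p) q (-1) hsub, Finset.sum_image (by intro x _ y _ h; simp only at h; omega)]
  refine Finset.sum_congr rfl fun n _ => ?_
  rw [dLP_coeff, show (n - 1 + 1 : ℤ) = n by ring, show (-1 - (n-1) : ℤ) = -n by ring]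
  push_cast; ring

/-! ### Matrix-level lemmas -/

variable {N : ℕ}

lemma derM_apply (a : Loop N) (i j : Fin N) : derM a i j = dLP (a i j) := rfl

lemma derM_add (a b : Loop N) : derM (a + b) = derM a + derM b := by
  funext i j
  show dLP ((a + b) i j) = dLP (a i j) + dLP (b i j)
  rw [Matrix.add_apply, dLP_add]

lemma derM_mul (a b : Loop N) : derM (a * b) = derM a * b + a * derM b := by
  funext i j
  show dLP ((a * b) i j) = (derM a * b + a * derM b) i j
  rw [Matrix.add_apply, Matrix.mul_apply, Matrix.mul_apply, Matrix.mul_apply]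
  have : dLP (∑ k, a i k * b k j) = ∑ k, dLP (a i k * b k j) := by
    classical
    induction (Finset.univ : Finset (Fin N)) using Finset.induction with
    | empty => simp [dLP_zero]
    | insert _ _ hx ih => rw [Finset.sum_insert hx, Finset.sum_insert hx, dLP_add, ih]
  rw [this]
  rw [← Finset.sum_add_distrib]
  exact Finset.sum_congr rfl fun k _ => by rw [dLP_mul]; rfl

lemma derM_one : derM (1 : Loop N) = 0 := by
  funext i j
  show dLP ((1 : Loop N) i j) = 0
  by_cases h : i = j
  · subst h
    rw [Matrix.one_apply_eq]
    have : (1 : R) = sngl 0 1 := rfl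
    rw [this, dLP_sngl]
    simp [sngl]
  · rw [Matrix.one_apply_ne h, dLP_zero]

/-- common finite support -/
def suppT (a : Loop N) : Finset ℤ :=
  Finset.univ.biUnion fun i : Fin N => Finset.univ.biUnion fun k : Fin N => (a i k).coeff.support

lemma supp_sub (a : Loop N) (i k : Fin N) : (a i k).coeff.support ⊆ suppT a := by
  intro n hn
  exact Finset.mem_biUnion.mpr ⟨i, Finset.mem_univ i,
    Finset.mem_biUnion.mpr ⟨k, Finset.mem_univ k, hn⟩⟩

lemma trace_expand (M P : Matrix (Fin N) (Fin N) ℂ) :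
    Matrix.trace (M * P) = ∑ i, ∑ k, M i k * P k i := by
  simp [Matrix.trace, Matrix.mul_apply, Matrix.diag]

lemma psi_eq (a b : Loop N) : psi a b = res (Matrix.trace (derM a * b)) := by
  classical
  have hsupp : (Function.support fun n : ℤ =>
      (n : ℂ) * Matrix.trace (coeffM a n * coeffM b (-n))) ⊆ ↑(suppT a) := by
    intro n hn
    by_contra hmem
    apply hn
    have hz : coeffM a n = 0 := by
      funext i k
      exact Finsupp.notMem_support_iff.mp (fun h => hmem (supp_sub a i k h))
    simp [hz]
  rw [psi, finsum_eq_finset_sum_of_support_subset _ hsupp]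
  -- RHS
  rw [res, Matrix.trace.eq_1 (derM a * b)]
  rw [AddMonoidAlgebra.coeff_sum, Finset.sum_apply']
  have hdiag : ∀ i : Fin N, ((derM a * b).diag i).coeff (-1)
      = ∑ k, ∑ n ∈ suppT a, (n:ℂ) * (a i k).coeff n * (b k i).coeff (-n) := by
    intro i
    show ((derM a * b) i i).coeff (-1) = _
    rw [Matrix.mul_apply, AddMonoidAlgebra.coeff_sum, Finset.sum_apply']
    exact Finset.sum_congr rfl fun k _ => by
      rw [derM_apply, key_coeff (a i k) (b k i) (supp_sub a i k)]
  rw [Finset.sum_congr rfl fun i _ => hdiag i]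
  have L : ∀ n ∈ suppT a, (n : ℂ) * Matrix.trace (coeffM a n * coeffM b (-n))
      = ∑ i, ∑ k, (n:ℂ) * (a i k).coeff n * (b k i).coeff (-n) := by
    intro n _
    rw [trace_expand, Finset.mul_sum]
    refine Finset.sum_congr rfl fun i _ => ?_
    rw [Finset.mul_sum]
    refine Finset.sum_congr rfl fun k _ => ?_
    show (n:ℂ) * ((a i k).coeff n * (b k i).coeff (-n)) = (n:ℂ) * (a i k).coeff n * (b k i).coeff (-n)
    ring
  rw [Finset.sum_congr rfl L]
  rw [Finset.sum_comm]
  refine Finset.sum_congr rfl fun i _ => ?_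
  rw [Finset.sum_comm]

/-! ### res linearity -/

lemma res_add (p q : R) : res (p + q) = res p + res q :=
  Finsupp.add_apply p.coeff q.coeff (-1)

lemma res_neg (p : R) : res (-p) = - res p :=
  Finsupp.neg_apply p.coeff (-1)

lemma res_smul (c : ℂ) (p : R) : res (c • p) = c * res p := by
  show (c • p).coeff (-1) = c * p.coeff (-1)
  rw [AddMonoidAlgebra.coeff_smul, Finsupp.smul_apply, smul_eq_mul]

/-! ### the inverse derivative relation -/

lemma derM_inv (U : (Loop N)ˣ) :
    derM (↑U⁻¹ : Loop N) =
      -((↑U⁻¹ : Loop N) * derM (U : Loop N) * (↑U⁻¹ : Loop N)) := by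
  have h : derM ((U : Loop N) * (↑U⁻¹ : Loop N)) = 0 := by
    rw [Units.mul_inv, derM_one]
  rw [derM_mul] at h
  have h2 : (↑U⁻¹ : Loop N) * (derM (U : Loop N) * (↑U⁻¹ : Loop N) + (U : Loop N) * derM (↑U⁻¹ : Loop N)) = 0 := by
    rw [h, mul_zero]
  rw [mul_add, ← mul_assoc, ← mul_assoc, Units.inv_mul, one_mul] at h2
  linear_combination (norm := noncomm_ring) h2

/-- Conjugation is multiplicative. -/
lemma conjM (U : (Loop N)ˣ) (x y : Loop N) :
    ((U:Loop N)*x*(↑U⁻¹:Loop N)) * ((U:Loop N)*y*(↑U⁻¹:Loop N))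
      = (U:Loop N)*(x*y)*(↑U⁻¹:Loop N) := by
  have h : ((U:Loop N)*x*(↑U⁻¹:Loop N)) * ((U:Loop N)*y*(↑U⁻¹:Loop N))
      = (U:Loop N)*x*(((↑U⁻¹:Loop N)*(U:Loop N))*(y*(↑U⁻¹:Loop N))) := by noncomm_ring
  rw [h, Units.inv_mul, one_mul]; noncomm_ring

/-- Key trace identity used for bracket preservation. -/
lemma trace_identity (U : (Loop N)ˣ) (a b : Loop N) :
    Matrix.trace (derM ((U : Loop N) * a * (↑U⁻¹ : Loop N)) * ((U : Loop N) * b * (↑U⁻¹ : Loop N)))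
      = Matrix.trace (derM a * b)
        + Matrix.trace ((↑U⁻¹ : Loop N) * derM (U : Loop N) * (a * b - b * a)) := by
  set V : Loop N := (↑U⁻¹ : Loop N) with hV
  set D : Loop N := derM (U : Loop N) with hD
  have hUV : (U : Loop N) * V = 1 := Units.mul_inv U
  have hVU : V * (U : Loop N) = 1 := Units.inv_mul U
  have expand : derM ((U:Loop N)*a*V)
      = D*a*V + (U:Loop N)*derM a*V + -((U:Loop N)*a*(V*D*V)) := by
    rw [derM_mul, derM_mul, derM_inv U, ← hV, ← hD]; noncomm_ring
  rw [expand, add_mul, add_mul, Matrix.trace_add, Matrix.trace_add, neg_mul, Matrix.trace_neg]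
  have h1 : Matrix.trace ((D*a*V) * ((U:Loop N)*b*V)) = Matrix.trace (V*D*(a*b)) := by
    have e : (D*a*V) * ((U:Loop N)*b*V) = D*(a*b)*V := by
      have e' : (D*a*V) * ((U:Loop N)*b*V) = D*a*((V*(U:Loop N))*(b*V)) := by noncomm_ring
      rw [e', hVU, one_mul]; noncomm_ring
    rw [e, Matrix.trace_mul_cycle]
  have h2 : Matrix.trace (((U:Loop N)*derM a*V) * ((U:Loop N)*b*V)) = Matrix.trace (derM a * b) := by
    have e : ((U:Loop N)*derM a*V) * ((U:Loop N)*b*V) = (U:Loop N)*(derM a*b)*V := by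
      have e' : ((U:Loop N)*derM a*V) * ((U:Loop N)*b*V)
          = (U:Loop N)*derM a*((V*(U:Loop N))*(b*V)) := by noncomm_ring
      rw [e', hVU, one_mul]; noncomm_ring
    rw [e, Matrix.trace_mul_cycle, hVU, one_mul]
  have h3 : Matrix.trace (((U:Loop N)*a*(V*D*V)) * ((U:Loop N)*b*V)) = Matrix.trace (V*D*(b*a)) := by
    have e : ((U:Loop N)*a*(V*D*V)) * ((U:Loop N)*b*V) = (U:Loop N)*(a*(V*D)*b)*V := by
      have e' : ((U:Loop N)*a*(V*D*V)) * ((U:Loop N)*b*V)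
          = (U:Loop N)*a*V*D*((V*(U:Loop N))*(b*V)) := by noncomm_ring
      rw [e', hVU, one_mul]; noncomm_ring
    rw [e, Matrix.trace_mul_cycle, hVU, one_mul, Matrix.trace_mul_cycle,
      Matrix.trace_mul_comm]
  rw [h1, h2, h3, mul_sub, Matrix.trace_sub]
  ring

lemma sigma_linv (U : (Loop N)ˣ) : Function.LeftInverse (sigmaU U⁻¹) (sigmaU U) := by
  intro x
  unfold sigmaU
  rw [inv_inv]
  set V : Loop N := (↑U⁻¹ : Loop N) with hV
  set D : Loop N := derM (U : Loop N) with hD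
  have hUV : (U : Loop N) * V = 1 := Units.mul_inv U
  have hVU : V * (U : Loop N) = 1 := Units.inv_mul U
  refine Prod.ext ?_ ?_
  · show V * ((U:Loop N) * x.1 * V) * (U:Loop N) = x.1
    have e : V * ((U:Loop N) * x.1 * V) * (U:Loop N)
        = (V*(U:Loop N)) * x.1 * (V*(U:Loop N)) := by noncomm_ring
    rw [e, hVU, one_mul, mul_one]
  · show x.2 + res (Matrix.trace (V * D * x.1))
        + res (Matrix.trace ((U:Loop N) * derM V * ((U:Loop N) * x.1 * V))) = x.2
    have e : (U:Loop N) * derM V * ((U:Loop N) * x.1 * V) = -(D * x.1 * V) := by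
      rw [derM_inv U, ← hV, ← hD]
      have e' : (U:Loop N) * -(V*D*V) * ((U:Loop N) * x.1 * V)
          = -(((U:Loop N)*V)*D*((V*(U:Loop N))*(x.1*V))) := by noncomm_ring
      rw [e', hUV, hVU, one_mul, one_mul]; noncomm_ring
    rw [e, Matrix.trace_neg, res_neg, Matrix.trace_mul_cycle D x.1 V]
    ring

/-- The type 1(a) formula defines a Lie algebra automorphism of the central extension:
it is bijective, ℂ-linear and preserves the bracket. -/
theorem sigmaU_isLieAutomorphism (N : ℕ) (hN : 0 < N) (U : (Loop N)ˣ) :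
    Function.Bijective (sigmaU U) ∧
    (∀ x y : Loop N × ℂ, sigmaU U (x + y) = sigmaU U x + sigmaU U y) ∧
    (∀ (c : ℂ) (x : Loop N × ℂ), sigmaU U (c • x) = c • sigmaU U x) ∧
    (∀ x y : Loop N × ℂ, sigmaU U (brCE x y) = brCE (sigmaU U x) (sigmaU U y)) := by
  refine ⟨⟨(sigma_linv U).injective, ?_⟩, ?_, ?_, ?_⟩
  · have h : Function.RightInverse (sigmaU U⁻¹) (sigmaU U) := by
      have := sigma_linv (U⁻¹)
      rwa [inv_inv] at this
    exact h.surjective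
  · intro x y
    unfold sigmaU
    refine Prod.ext ?_ ?_
    · show (U:Loop N) * (x + y).1 * _ = _
      rw [Prod.fst_add, mul_add, add_mul]
      rfl
    · show (x + y).2 + res (Matrix.trace (_ * (x + y).1)) = _
      rw [Prod.fst_add, Prod.snd_add, mul_add, Matrix.trace_add, res_add]
      show _ = (x.2 + _) + (y.2 + _)
      ring
  · intro c x
    unfold sigmaU
    refine Prod.ext ?_ ?_
    · show (U:Loop N) * (c • x).1 * _ = c • ((U:Loop N) * x.1 * _)
      rw [Prod.smul_fst, mul_smul_comm, smul_mul_assoc]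
    · show (c • x).2 + res (Matrix.trace (_ * (c • x).1)) = c • (x.2 + _)
      rw [Prod.smul_fst, Prod.smul_snd, mul_smul_comm, Matrix.trace_smul, res_smul,
        smul_eq_mul, smul_eq_mul]
      ring
  · intro x y
    unfold sigmaU brCE
    refine Prod.ext ?_ ?_
    · show (U:Loop N) * ⁅x.1, y.1⁆ * (↑U⁻¹:Loop N)
        = ⁅(U:Loop N) * x.1 * (↑U⁻¹:Loop N), (U:Loop N) * y.1 * (↑U⁻¹:Loop N)⁆
      rw [Ring.lie_def, Ring.lie_def, mul_sub, sub_mul, conjM U x.1 y.1, conjM U y.1 x.1]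
    · show psi x.1 y.1 + res (Matrix.trace ((↑U⁻¹:Loop N) * derM (U:Loop N) * ⁅x.1, y.1⁆))
        = psi ((U:Loop N) * x.1 * (↑U⁻¹:Loop N)) ((U:Loop N) * y.1 * (↑U⁻¹:Loop N))
      rw [psi_eq, psi_eq, trace_identity U x.1 y.1, res_add, Ring.lie_def]
end
end

section
/- Let p, q be positive natural numbers with N = p + q, let J ∈ 𝔏 be the constant diagonal matrix diag(1,…,1,−1,…,−1) (p ones, q minus-ones), and let η : 𝔏 → 𝔏 be the substitution t ↦ −t given coefficientwise by (η X)ₙ = (−1)ⁿ·Xₙ. Then the map τ : 𝔏 → 𝔏, τ(X) = J*(η X)*J, is an involutive ℂ-linear Lie algebra automorphism of 𝔏 (τ² = id and τ[a,b] = [τa, τb]) which commutes with the Cartan involution ω; this is the type 1(a) automorphism with u = −1 used in Case II of the paper. -/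
noncomputable section

/-- The Cartan involution `ω`, determined by `(ω a)ₙ = −(a₋ₙ)ᴴ` for all `n : ℤ`,
i.e. the map `X(t) ↦ −conj(X)(t⁻¹)ᵗ`. -/
def omega {N : ℕ} (a : Loop N) : Loop N :=
  fun i j => Finsupp.sum (a j i).coeff fun n c => AddMonoidAlgebra.single (-n) (-(starRingEnd ℂ c))

/-- The constant diagonal matrix `J = diag(1,…,1,−1,…,−1)` (`p` ones, `q` minus-ones),
as an element of the loop algebra `Loop (p + q)`. -/
def Jmat (p q : ℕ) : Loop (p + q) :=
  Matrix.diagonal fun i => if (i : ℕ) < p then 1 else -1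

/-- The substitution `t ↦ −t`, given coefficientwise by `(η X)ₙ = (−1)ⁿ · Xₙ`. -/
def eta {N : ℕ} (a : Loop N) : Loop N :=
  fun i j => Finsupp.sum (a i j).coeff fun n c => AddMonoidAlgebra.single n ((-1 : ℂ) ^ n * c)

/-- The type 1(a) automorphism with `u = −1`: `τ(X) = J (η X) J`. -/
def tauJ (p q : ℕ) (X : Loop (p + q)) : Loop (p + q) :=
  Jmat p q * eta X * Jmat p q

/-! ### Scalar-level auxiliary maps -/

/-- The substitution `t ↦ -t` on a single Laurent polynomial. -/
def etp (f : LaurentPolynomial ℂ) : LaurentPolynomial ℂ :=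
  Finsupp.sum f.coeff fun n c => AddMonoidAlgebra.single n ((-1 : ℂ) ^ n * c)

/-- The scalar-level Cartan involution ingredient. -/
def omp (f : LaurentPolynomial ℂ) : LaurentPolynomial ℂ :=
  Finsupp.sum f.coeff fun n c => AddMonoidAlgebra.single (-n) (-(starRingEnd ℂ c))

lemma etp_single (n : ℤ) (c : ℂ) : etp (AddMonoidAlgebra.single n c) = AddMonoidAlgebra.single n ((-1:ℂ)^n * c) := by
  rw [etp, AddMonoidAlgebra.coeff_single, Finsupp.sum_single_index]
  rw [mul_zero, AddMonoidAlgebra.single_zero]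

lemma omp_single (n : ℤ) (c : ℂ) :
    omp (AddMonoidAlgebra.single n c) = AddMonoidAlgebra.single (-n) (-(starRingEnd ℂ c)) := by
  rw [omp, AddMonoidAlgebra.coeff_single, Finsupp.sum_single_index]
  rw [map_zero, neg_zero, AddMonoidAlgebra.single_zero]

lemma etp_add (f g : LaurentPolynomial ℂ) : etp (f + g) = etp f + etp g := by
  unfold etp
  rw [AddMonoidAlgebra.coeff_add]
  apply Finsupp.sum_add_index'
  · intro n; rw [mul_zero, AddMonoidAlgebra.single_zero]
  · intro n a b; rw [mul_add, AddMonoidAlgebra.single_add]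

lemma omp_add (f g : LaurentPolynomial ℂ) : omp (f + g) = omp f + omp g := by
  unfold omp
  rw [AddMonoidAlgebra.coeff_add]
  apply Finsupp.sum_add_index'
  · intro n; rw [map_zero, neg_zero, AddMonoidAlgebra.single_zero]
  · intro n a b; rw [map_add, neg_add, AddMonoidAlgebra.single_add]

lemma etp_zero : etp 0 = 0 := by simp [etp]

lemma etp_one : etp 1 = 1 := by
  have h : (1 : LaurentPolynomial ℂ) = AddMonoidAlgebra.single (0:ℤ) (1:ℂ) := rfl
  rw [h, etp_single]; norm_num

lemma etp_smul (c : ℂ) (f : LaurentPolynomial ℂ) : etp (c • f) = c • etp f := by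
  induction f using AddMonoidAlgebra.induction_linear with
  | zero => simp [etp]
  | add f g hf hg => rw [smul_add, etp_add, etp_add, hf, hg, smul_add]
  | single n a =>
      rw [AddMonoidAlgebra.smul_single, etp_single, etp_single, AddMonoidAlgebra.smul_single, smul_eq_mul,
        smul_eq_mul]
      ring_nf

lemma etp_etp (f : LaurentPolynomial ℂ) : etp (etp f) = f := by
  induction f using AddMonoidAlgebra.induction_linear with
  | zero => simp [etp]
  | add f g hf hg => rw [etp_add, etp_add, hf, hg]
  | single n c =>
      rw [etp_single, etp_single, ← mul_assoc, ← mul_zpow, neg_mul_neg, one_mul, one_zpow,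
        one_mul]

lemma etp_omp (f : LaurentPolynomial ℂ) : etp (omp f) = omp (etp f) := by
  induction f using AddMonoidAlgebra.induction_linear with
  | zero => simp [etp, omp]
  | add f g hf hg => rw [omp_add, etp_add, etp_add, omp_add, hf, hg]
  | single n c =>
      rw [omp_single, etp_single, etp_single, omp_single]
      have h1 : (starRingEnd ℂ) ((-1:ℂ)^n) = (-1:ℂ)^n := by
        rw [map_zpow₀, map_neg, map_one]
      have h2 : ((-1:ℂ))^(-n) = (-1:ℂ)^n := by
        rw [zpow_neg, ← inv_zpow, inv_neg, inv_one]
      rw [map_mul, h1, h2]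
      congr 1
      ring

lemma omp_neg (f : LaurentPolynomial ℂ) : omp (-f) = - omp f := by
  induction f using AddMonoidAlgebra.induction_linear with
  | zero => simp [omp]
  | add f g hf hg => rw [neg_add, omp_add, omp_add, hf, hg, neg_add]
  | single n c =>
      rw [← AddMonoidAlgebra.single_neg, omp_single, omp_single, map_neg, neg_neg,
        ← AddMonoidAlgebra.single_neg, neg_neg]

lemma etp_CT (c : ℂ) (n : ℤ) :
    etp (LaurentPolynomial.C c * LaurentPolynomial.T n)
      = LaurentPolynomial.C ((-1:ℂ)^n * c) * LaurentPolynomial.T n := by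
  rw [← LaurentPolynomial.single_eq_C_mul_T, etp_single, LaurentPolynomial.single_eq_C_mul_T]

lemma CT_mul_CT (c d : ℂ) (n m : ℤ) :
    (LaurentPolynomial.C c * LaurentPolynomial.T n) *
      (LaurentPolynomial.C d * LaurentPolynomial.T m)
      = LaurentPolynomial.C (c*d) * LaurentPolynomial.T (n+m) := by
  rw [LaurentPolynomial.T_add, map_mul, mul_mul_mul_comm]

lemma etp_mul (f g : LaurentPolynomial ℂ) : etp (f * g) = etp f * etp g := by
  induction f using AddMonoidAlgebra.induction_linear with
  | zero => simp [etp_zero]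
  | add f f' hf hf' => rw [add_mul, etp_add, hf, hf', etp_add, add_mul]
  | single n c =>
    induction g using AddMonoidAlgebra.induction_linear with
    | zero => simp [etp_zero]
    | add g g' hg hg' => rw [mul_add, etp_add, hg, hg', etp_add, mul_add]
    | single m d =>
      rw [LaurentPolynomial.single_eq_C_mul_T, LaurentPolynomial.single_eq_C_mul_T,
        CT_mul_CT, etp_CT, etp_CT, etp_CT, CT_mul_CT]
      congr 1
      rw [zpow_add₀ (by norm_num : (-1:ℂ) ≠ 0)]
      ring

lemma etp_neg (f : LaurentPolynomial ℂ) : etp (-f) = - etp f := by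
  have := etp_add f (-f)
  rw [add_neg_cancel, etp_zero] at this
  linear_combination -this

/-! ### Matrix-level lemmas -/

/-- `etp` bundled as a ring homomorphism. -/
def etpHom : LaurentPolynomial ℂ →+* LaurentPolynomial ℂ where
  toFun := etp
  map_one' := etp_one
  map_mul' := etp_mul
  map_zero' := etp_zero
  map_add' := etp_add

lemma eta_eq_map {N : ℕ} (X : Loop N) : eta X = X.map etpHom := rfl

lemma eta_apply {N : ℕ} (X : Loop N) (i j : Fin N) : eta X i j = etp (X i j) := rfl

lemma omega_apply {N : ℕ} (X : Loop N) (i j : Fin N) : omega X i j = omp (X j i) := rfl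

lemma eta_mul {N : ℕ} (X Y : Loop N) : eta (X * Y) = eta X * eta Y := by
  rw [eta_eq_map, eta_eq_map, eta_eq_map, Matrix.map_mul]

lemma eta_add {N : ℕ} (X Y : Loop N) : eta (X + Y) = eta X + eta Y := by
  funext i j
  simp [eta_apply, Matrix.add_apply, etp_add]

lemma eta_sub {N : ℕ} (X Y : Loop N) : eta (X - Y) = eta X - eta Y := by
  funext i j
  simp only [eta_apply, Matrix.sub_apply, sub_eq_add_neg, Matrix.add_apply, Matrix.neg_apply,
    etp_add, etp_neg]

lemma eta_smul {N : ℕ} (c : ℂ) (X : Loop N) : eta (c • X) = c • eta X := by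
  funext i j
  simp [eta_apply, Matrix.smul_apply, etp_smul]

lemma eta_eta {N : ℕ} (X : Loop N) : eta (eta X) = X := by
  funext i j
  simp [eta_apply, etp_etp]

lemma eta_Jmat (p q : ℕ) : eta (Jmat p q) = Jmat p q := by
  funext i j
  rw [eta_apply, Jmat]
  by_cases h : i = j
  · subst h
    rw [Matrix.diagonal_apply_eq]
    split_ifs
    · exact etp_one
    · rw [etp_neg, etp_one]
  · rw [Matrix.diagonal_apply_ne _ h, etp_zero]

lemma Jmat_mul_Jmat (p q : ℕ) : Jmat p q * Jmat p q = 1 := by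
  rw [Jmat, Matrix.diagonal_mul_diagonal]
  have h : (fun i : Fin (p+q) => (if (i:ℕ) < p then (1:LaurentPolynomial ℂ) else -1) *
      (if (i:ℕ) < p then 1 else -1)) = fun _ => (1 : LaurentPolynomial ℂ) := by
    funext i; split_ifs <;> ring
  rw [h, Matrix.diagonal_one]

lemma tauJ_mul (p q : ℕ) (X Y : Loop (p + q)) :
    tauJ p q (X * Y) = tauJ p q X * tauJ p q Y := by
  unfold tauJ
  rw [eta_mul]
  have : Jmat p q * eta X * Jmat p q * (Jmat p q * eta Y * Jmat p q)
      = Jmat p q * eta X * (Jmat p q * Jmat p q) * eta Y * Jmat p q := by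
    noncomm_ring
  rw [this, Jmat_mul_Jmat, mul_one, mul_assoc (Jmat p q * eta X)]
  noncomm_ring

lemma tauJ_apply (p q : ℕ) (X : Loop (p + q)) (i j : Fin (p + q)) :
    tauJ p q X i j
      = (if (i : ℕ) < p then 1 else -1) * etp (X i j) * (if (j : ℕ) < p then 1 else -1) := by
  rw [tauJ, Jmat, Matrix.mul_diagonal, Matrix.diagonal_mul, eta_apply]


lemma sign_mul_omp (s f : LaurentPolynomial ℂ) (hs : s = 1 ∨ s = -1) :
    omp (s * f) = s * omp f := by
  rcases hs with h | h <;> subst h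
  · rw [one_mul, one_mul]
  · rw [neg_one_mul, omp_neg, neg_one_mul]

/-- `τ = σ_J ∘ η` is an involutive ℂ-linear Lie algebra automorphism of the loop algebra
commuting with the Cartan involution ω. -/
theorem tauJ_involution (p q : ℕ) (hp : 0 < p) (hq : 0 < q) :
    (∀ X : Loop (p + q), tauJ p q (tauJ p q X) = X) ∧
    (∀ X Y : Loop (p + q), tauJ p q (X + Y) = tauJ p q X + tauJ p q Y) ∧
    (∀ (c : ℂ) (X : Loop (p + q)), tauJ p q (c • X) = c • tauJ p q X) ∧
    (∀ a b : Loop (p + q), tauJ p q ⁅a, b⁆ = ⁅tauJ p q a, tauJ p q b⁆) ∧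
    (∀ X : Loop (p + q), tauJ p q (omega X) = omega (tauJ p q X)) := by
  have hadd : ∀ X Y : Loop (p + q), tauJ p q (X + Y) = tauJ p q X + tauJ p q Y := by
    intro X Y
    unfold tauJ
    rw [eta_add, mul_add, add_mul]
  have hsub : ∀ X Y : Loop (p + q), tauJ p q (X - Y) = tauJ p q X - tauJ p q Y := by
    intro X Y
    unfold tauJ
    rw [eta_sub, mul_sub, sub_mul]
  refine ⟨?_, hadd, ?_, ?_, ?_⟩
  · -- involution
    intro X
    unfold tauJ
    rw [eta_mul, eta_mul, eta_Jmat, eta_eta]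
    calc Jmat p q * (Jmat p q * X * Jmat p q) * Jmat p q
        = (Jmat p q * Jmat p q) * X * (Jmat p q * Jmat p q) := by noncomm_ring
      _ = X := by rw [Jmat_mul_Jmat, one_mul, mul_one]
  · -- scalar
    intro c X
    unfold tauJ
    rw [eta_smul, Matrix.mul_smul, Matrix.smul_mul]
  · -- bracket
    intro a b
    rw [Ring.lie_def, Ring.lie_def, hsub, tauJ_mul, tauJ_mul]
  · -- commutes with omega
    intro X
    funext i j
    rw [tauJ_apply p q (omega X) i j, omega_apply X i j, omega_apply (tauJ p q X) i j,
      tauJ_apply p q X j i]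
    set s : LaurentPolynomial ℂ := if (i : ℕ) < p then 1 else -1 with hs
    set t : LaurentPolynomial ℂ := if (j : ℕ) < p then 1 else -1 with ht
    have hs' : s = 1 ∨ s = -1 := by rw [hs]; split_ifs <;> simp
    have ht' : t = 1 ∨ t = -1 := by rw [ht]; split_ifs <;> simp
    have key : t * etp (X j i) * s = (t * s) * etp (X j i) := by ring
    rw [key, sign_mul_omp _ _ ?_, etp_omp]
    · ring
    · rcases hs' with h | h <;> rcases ht' with h2 | h2 <;> rw [h, h2] <;> norm_num
end
end
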